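/- If Δ and Δ' are finite simplicial complexes on disjoint vertex sets and Δ * Δ' is their join (faces are unions F ∪ F' with F ∈ Δ, F' ∈ Δ'), then the impartial strong placement game of the join is equivalent to the disjunctive sum: G(Δ * Δ') ≈ G(Δ) + G(Δ'). -/

import Mathlib

universe u

/-! Mathlib's `SetTheory.PGame` (removed from Mathlib since); reproduced here with its old definitions. -/
namespace SetTheory

/-- Pre-games, as in the older Mathlib. -/
inductive PGame : Type (u + 1)
  | mk : ∀ α β : Type u, (α → PGame) → (β → PGame) → PGame

namespace PGame

/-- The pair of relations `≤` and `⧏` on pre-games, defined by mutual recursion. -/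
noncomputable def le_lf (x : PGame.{u}) : PGame.{u} → Prop × Prop := by
  induction x with
  | mk xl xr xL xR IHxl IHxr =>
    intro y
    induction y with
    | mk yl yr yL yR IHyl IHyr =>
      exact ((∀ i, (IHxl i (mk yl yr yL yR)).2) ∧ ∀ j, (IHyr j).2,
        (∃ i, (IHyl i).1) ∨ ∃ j, (IHxr j (mk yl yr yL yR)).1)

instance : LE PGame.{u} :=
  ⟨fun x y => (le_lf x y).1⟩

/-- Game equivalence: `x ≤ y ∧ y ≤ x`. -/
def Equiv (x y : PGame.{u}) : Prop :=
  x ≤ y ∧ y ≤ x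

instance : HasEquiv PGame.{u} :=
  ⟨Equiv⟩

/-- The disjunctive sum of pre-games. -/
noncomputable def add (x : PGame.{u}) : PGame.{u} → PGame.{u} := by
  induction x with
  | mk xl xr xL xR IHxl IHxr =>
    intro y
    induction y with
    | mk yl yr yL yR IHyl IHyr =>
      exact mk (xl ⊕ yl) (xr ⊕ yr)
        (Sum.rec (fun i => IHxl i (mk yl yr yL yR)) IHyl)
        (Sum.rec (fun i => IHxr i (mk yl yr yL yR)) IHyr)

noncomputable instance : Add PGame.{u} :=
  ⟨add⟩

end PGame

end SetTheory

open SetTheory PGame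
open scoped PGame

variable {V : Type} [DecidableEq V]

/-- A (finite) simplicial complex: a downward-closed family of finite sets of vertices. -/
def IsComplex (Δ : Finset (Finset V)) : Prop :=
  ∀ F ∈ Δ, ∀ F' ⊆ F, F' ∈ Δ

/-- `F` is a facet (maximal face) of `Δ`. -/
def IsFacet (Δ : Finset (Finset V)) (F : Finset V) : Prop :=
  F ∈ Δ ∧ ∀ F' ∈ Δ, F ⊆ F' → F = F'

/-- The link of a vertex `v` in `Δ`: faces `F` with `v ∉ F` and `F ∪ {v} ∈ Δ`. -/
def linkC (Δ : Finset (Finset V)) (v : V) : Finset (Finset V) :=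
  Δ.filter fun F => v ∉ F ∧ insert v F ∈ Δ

theorem linkC_sup_lt (Δ : Finset (Finset V)) (v : V) (hv : {v} ∈ Δ) :
    (linkC Δ v).sup Finset.card < Δ.sup Finset.card := by
  have h1 : (1 : ℕ) ≤ Δ.sup Finset.card := by
    simpa using Finset.le_sup (f := Finset.card) hv
  refine (Finset.sup_lt_iff (by simp only [bot_eq_zero]; omega)).2 ?_
  intro F hF
  simp only [linkC, Finset.mem_filter] at hF
  obtain ⟨-, hvF, hins⟩ := hF
  have h2 := Finset.le_sup (f := Finset.card) hins
  rw [Finset.card_insert_of_notMem hvF] at h2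
  omega

/-- The impartial strong placement game of a simplicial complex: both players' moves are to
the links of the vertices of `Δ`. -/
def SPGame (Δ : Finset (Finset V)) : PGame :=
  ⟨{v : V // {v} ∈ Δ}, {v : V // {v} ∈ Δ},
    fun v => SPGame (linkC Δ v.1), fun v => SPGame (linkC Δ v.1)⟩
termination_by Δ.sup Finset.card
decreasing_by all_goals exact linkC_sup_lt Δ v.1 v.2

/-- The join of two simplicial complexes: faces are the unions `F ∪ F'` with `F ∈ Δ`,
`F' ∈ Δ'`. -/
def joinC (Δ Δ' : Finset (Finset V)) : Finset (Finset V) :=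
  (Δ ×ˢ Δ').image fun p => p.1 ∪ p.2

/-- The set of vertices of a complex. -/
def vertsC (Δ : Finset (Finset V)) : Finset V :=
  Δ.sup id

/-! ### Basic API for the pre-games above -/

namespace SetTheory.PGame

def LeftMoves : PGame.{u} → Type u
  | mk l _ _ _ => l

def RightMoves : PGame.{u} → Type u
  | mk _ r _ _ => r

def moveLeft : (g : PGame.{u}) → LeftMoves g → PGame.{u}
  | mk _ _ L _ => L

def moveRight : (g : PGame.{u}) → RightMoves g → PGame.{u}
  | mk _ _ _ R => R

def LF (x y : PGame.{u}) : Prop :=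
  (le_lf x y).2

end SetTheory.PGame

infix:50 " ⧏ " => SetTheory.PGame.LF

namespace SetTheory.PGame

theorem pg_le_def {x y : PGame.{u}} :
    x ≤ y ↔ (∀ i, x.moveLeft i ⧏ y) ∧ ∀ j, x ⧏ y.moveRight j := by
  cases x; cases y; exact Iff.rfl

theorem pg_lf_def {x y : PGame.{u}} :
    x ⧏ y ↔ (∃ i, x ≤ y.moveLeft i) ∨ ∃ j, x.moveRight j ≤ y := by
  cases x; cases y; exact Iff.rfl

theorem pg_not_le_aux (x y : PGame.{u}) : (x ⧏ y ↔ ¬ y ≤ x) ∧ (y ⧏ x ↔ ¬ x ≤ y) := by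
  induction x generalizing y with
  | mk xl xr xL xR IHxl IHxr =>
  induction y with
  | mk yl yr yL yR IHyl IHyr =>
  have e1 : mk xl xr xL xR ⧏ mk yl yr yL yR ↔
      (∃ i, mk xl xr xL xR ≤ yL i) ∨ ∃ j, xR j ≤ mk yl yr yL yR := pg_lf_def
  have e2 : mk yl yr yL yR ≤ mk xl xr xL xR ↔
      (∀ i, yL i ⧏ mk xl xr xL xR) ∧ ∀ j, mk yl yr yL yR ⧏ xR j := pg_le_def
  have e3 : mk yl yr yL yR ⧏ mk xl xr xL xR ↔
      (∃ i, mk yl yr yL yR ≤ xL i) ∨ ∃ j, yR j ≤ mk xl xr xL xR := pg_lf_def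
  have e4 : mk xl xr xL xR ≤ mk yl yr yL yR ↔
      (∀ i, xL i ⧏ mk yl yr yL yR) ∧ ∀ j, mk xl xr xL xR ⧏ yR j := pg_le_def
  rw [e1, e2, e3, e4]
  have f1 : ∀ i, yL i ⧏ mk xl xr xL xR ↔ ¬ mk xl xr xL xR ≤ yL i := fun i => (IHyl i).2
  have f2 : ∀ j, mk yl yr yL yR ⧏ xR j ↔ ¬ xR j ≤ mk yl yr yL yR := fun j => (IHxr j _).2
  have f3 : ∀ i, xL i ⧏ mk yl yr yL yR ↔ ¬ mk yl yr yL yR ≤ xL i := fun i => (IHxl i _).1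
  have f4 : ∀ j, mk xl xr xL xR ⧏ yR j ↔ ¬ yR j ≤ mk xl xr xL xR := fun j => (IHyr j).1
  simp only [f1, f2, f3, f4, not_and_or, not_forall, not_not, and_self]

theorem pg_lf_iff_not_le {x y : PGame.{u}} : x ⧏ y ↔ ¬ y ≤ x :=
  (pg_not_le_aux x y).1

theorem pg_le_refl (x : PGame.{u}) : x ≤ x := by
  induction x with
  | mk xl xr xL xR IHl IHr =>
    exact pg_le_def.2 ⟨fun i => pg_lf_def.2 (Or.inl ⟨i, IHl i⟩),
      fun j => pg_lf_def.2 (Or.inr ⟨j, IHr j⟩)⟩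

theorem pg_le_trans_aux {x y z : PGame.{u}}
    (h₁ : ∀ i, y ≤ z → z ≤ x.moveLeft i → y ≤ x.moveLeft i)
    (h₂ : ∀ j, z.moveRight j ≤ x → x ≤ y → z.moveRight j ≤ y) (hxy : x ≤ y) (hyz : y ≤ z) :
    x ≤ z :=
  pg_le_def.2 ⟨fun i => pg_lf_iff_not_le.2 fun h =>
      pg_lf_iff_not_le.1 ((pg_le_def.1 hxy).1 i) (h₁ i hyz h),
    fun j => pg_lf_iff_not_le.2 fun h =>
      pg_lf_iff_not_le.1 ((pg_le_def.1 hyz).2 j) (h₂ j h hxy)⟩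

theorem pg_le_trans_all (x y z : PGame.{u}) :
    (x ≤ y → y ≤ z → x ≤ z) ∧ (y ≤ z → z ≤ x → y ≤ x) ∧ (z ≤ x → x ≤ y → z ≤ y) := by
  induction x generalizing y z with
  | mk xl xr xL xR IHxl IHxr =>
  induction y generalizing z with
  | mk yl yr yL yR IHyl IHyr =>
  induction z with
  | mk zl zr zL zR IHzl IHzr =>
  exact ⟨pg_le_trans_aux (fun i => (IHxl i _ _).2.1) (fun j => (IHzr j).2.2),
    pg_le_trans_aux (fun i => (IHyl i _).2.2) (fun j => (IHxr j _ _).1),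
    pg_le_trans_aux (fun i => (IHzl i).1) (fun j => (IHyr j _).2.1)⟩

theorem pg_le_trans {x y z : PGame.{u}} (h1 : x ≤ y) (h2 : y ≤ z) : x ≤ z :=
  (pg_le_trans_all x y z).1 h1 h2

theorem moveLeft_lf {x : PGame.{u}} (i : x.LeftMoves) : x.moveLeft i ⧏ x :=
  pg_lf_def.2 (Or.inl ⟨i, pg_le_refl _⟩)

theorem lf_moveRight {x : PGame.{u}} (j : x.RightMoves) : x ⧏ x.moveRight j :=
  pg_lf_def.2 (Or.inr ⟨j, pg_le_refl _⟩)

theorem le_of_forall_lf {x y : PGame.{u}} (h₁ : ∀ i, x.moveLeft i ⧏ y)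
    (h₂ : ∀ j, x ⧏ y.moveRight j) : x ≤ y :=
  pg_le_def.2 ⟨h₁, h₂⟩

theorem lf_congr_left {x₁ y₁ x₂ : PGame.{u}} (hx : x₁ ≈ y₁) : x₁ ⧏ x₂ ↔ y₁ ⧏ x₂ := by
  have h : x₁ ≤ y₁ ∧ y₁ ≤ x₁ := hx
  rw [pg_lf_iff_not_le, pg_lf_iff_not_le]
  exact not_congr ⟨fun h' => pg_le_trans h' h.1, fun h' => pg_le_trans h' h.2⟩

theorem lf_congr_right {x₁ x₂ y₂ : PGame.{u}} (hx : x₂ ≈ y₂) : x₁ ⧏ x₂ ↔ x₁ ⧏ y₂ := by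
  have h : x₂ ≤ y₂ ∧ y₂ ≤ x₂ := hx
  rw [pg_lf_iff_not_le, pg_lf_iff_not_le]
  exact not_congr ⟨fun h' => pg_le_trans h.2 h', fun h' => pg_le_trans h.1 h'⟩

def toLeftMovesAdd : {x y : PGame.{u}} → x.LeftMoves ⊕ y.LeftMoves → (x + y).LeftMoves
  | mk _ _ _ _, mk _ _ _ _, k => k

def toRightMovesAdd : {x y : PGame.{u}} → x.RightMoves ⊕ y.RightMoves → (x + y).RightMoves
  | mk _ _ _ _, mk _ _ _ _, k => k

theorem add_moveLeft_inl {x y : PGame.{u}} {i : x.LeftMoves} :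
    (x + y).moveLeft (toLeftMovesAdd (Sum.inl i)) = x.moveLeft i + y := by
  cases x; cases y; rfl

theorem add_moveLeft_inr {x y : PGame.{u}} {i : y.LeftMoves} :
    (x + y).moveLeft (toLeftMovesAdd (Sum.inr i)) = x + y.moveLeft i := by
  cases x; cases y; rfl

theorem add_moveRight_inl {x y : PGame.{u}} {i : x.RightMoves} :
    (x + y).moveRight (toRightMovesAdd (Sum.inl i)) = x.moveRight i + y := by
  cases x; cases y; rfl

theorem add_moveRight_inr {x y : PGame.{u}} {i : y.RightMoves} :
    (x + y).moveRight (toRightMovesAdd (Sum.inr i)) = x + y.moveRight i := by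
  cases x; cases y; rfl

theorem leftMoves_add_eq {x y : PGame.{u}} (k : (x + y).LeftMoves) :
    (∃ i, k = toLeftMovesAdd (Sum.inl i)) ∨ ∃ i, k = toLeftMovesAdd (Sum.inr i) := by
  cases x; cases y
  rcases k with i | i
  · exact Or.inl ⟨i, rfl⟩
  · exact Or.inr ⟨i, rfl⟩

theorem rightMoves_add_eq {x y : PGame.{u}} (k : (x + y).RightMoves) :
    (∃ i, k = toRightMovesAdd (Sum.inl i)) ∨ ∃ i, k = toRightMovesAdd (Sum.inr i) := by
  cases x; cases y
  rcases k with i | i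
  · exact Or.inl ⟨i, rfl⟩
  · exact Or.inr ⟨i, rfl⟩

theorem leftMoves_add_cases {x y : PGame.{u}} (k : (x + y).LeftMoves)
    {P : (x + y).LeftMoves → Prop} (hl : ∀ i, P (toLeftMovesAdd (Sum.inl i)))
    (hr : ∀ i, P (toLeftMovesAdd (Sum.inr i))) : P k := by
  rcases leftMoves_add_eq k with ⟨i, rfl⟩ | ⟨i, rfl⟩
  · exact hl i
  · exact hr i

theorem rightMoves_add_cases {x y : PGame.{u}} (k : (x + y).RightMoves)
    {P : (x + y).RightMoves → Prop} (hl : ∀ i, P (toRightMovesAdd (Sum.inl i)))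
    (hr : ∀ i, P (toRightMovesAdd (Sum.inr i))) : P k := by
  rcases rightMoves_add_eq k with ⟨i, rfl⟩ | ⟨i, rfl⟩
  · exact hl i
  · exact hr i

theorem pg_add_le_aux {x y z : PGame.{u}}
    (ihx : ∀ i, x.moveLeft i ⧏ y → x.moveLeft i + z ⧏ y + z)
    (ihy : ∀ j, x ⧏ y.moveRight j → x + z ⧏ y.moveRight j + z)
    (ihzl : ∀ k, x ≤ y → x + z.moveLeft k ≤ y + z.moveLeft k)
    (ihzr : ∀ k, x ≤ y → x + z.moveRight k ≤ y + z.moveRight k) (h : x ≤ y) :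
    x + z ≤ y + z := by
  rw [pg_le_def]
  constructor
  · intro k
    rcases leftMoves_add_eq k with ⟨i, rfl⟩ | ⟨i, rfl⟩
    · rw [add_moveLeft_inl]; exact ihx i ((pg_le_def.1 h).1 i)
    · rw [add_moveLeft_inr, pg_lf_def]
      exact Or.inl ⟨toLeftMovesAdd (Sum.inr i), by rw [add_moveLeft_inr]; exact ihzl i h⟩
  · intro k
    rcases rightMoves_add_eq k with ⟨j, rfl⟩ | ⟨j, rfl⟩
    · rw [add_moveRight_inl]; exact ihy j ((pg_le_def.1 h).2 j)
    · rw [add_moveRight_inr, pg_lf_def]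
      exact Or.inr ⟨toRightMovesAdd (Sum.inr j), by rw [add_moveRight_inr]; exact ihzr j h⟩

theorem pg_add_lf_aux {x y z : PGame.{u}}
    (ihy : ∀ i, x ≤ y.moveLeft i → x + z ≤ y.moveLeft i + z)
    (ihx : ∀ j, x.moveRight j ≤ y → x.moveRight j + z ≤ y + z) (h : x ⧏ y) :
    x + z ⧏ y + z := by
  rw [pg_lf_def]
  rcases pg_lf_def.1 h with ⟨i, hi⟩ | ⟨j, hj⟩
  · exact Or.inl ⟨toLeftMovesAdd (Sum.inl i), by rw [add_moveLeft_inl]; exact ihy i hi⟩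
  · exact Or.inr ⟨toRightMovesAdd (Sum.inl j), by rw [add_moveRight_inl]; exact ihx j hj⟩

theorem pg_add_mono_right (z x y : PGame.{u}) :
    (x ≤ y → x + z ≤ y + z) ∧ (x ⧏ y → x + z ⧏ y + z) := by
  induction z generalizing x y with
  | mk zl zr zL zR IHzl IHzr =>
  induction x generalizing y with
  | mk xl xr xL xR IHxl IHxr =>
  induction y with
  | mk yl yr yL yR IHyl IHyr =>
  exact ⟨pg_add_le_aux (fun i => (IHxl i _).2) (fun j => (IHyr j).2)
      (fun k => (IHzl k _ _).1) (fun k => (IHzr k _ _).1),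
    pg_add_lf_aux (fun i => (IHyl i).1) (fun j => (IHxr j _).1)⟩

theorem pg_add_le_aux' {x y z : PGame.{u}}
    (ihx : ∀ i, x.moveLeft i ⧏ y → z + x.moveLeft i ⧏ z + y)
    (ihy : ∀ j, x ⧏ y.moveRight j → z + x ⧏ z + y.moveRight j)
    (ihzl : ∀ k, x ≤ y → z.moveLeft k + x ≤ z.moveLeft k + y)
    (ihzr : ∀ k, x ≤ y → z.moveRight k + x ≤ z.moveRight k + y) (h : x ≤ y) :
    z + x ≤ z + y := by
  rw [pg_le_def]
  constructor
  · intro k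
    rcases leftMoves_add_eq k with ⟨i, rfl⟩ | ⟨i, rfl⟩
    · rw [add_moveLeft_inl, pg_lf_def]
      exact Or.inl ⟨toLeftMovesAdd (Sum.inl i), by rw [add_moveLeft_inl]; exact ihzl i h⟩
    · rw [add_moveLeft_inr]; exact ihx i ((pg_le_def.1 h).1 i)
  · intro k
    rcases rightMoves_add_eq k with ⟨j, rfl⟩ | ⟨j, rfl⟩
    · rw [add_moveRight_inl, pg_lf_def]
      exact Or.inr ⟨toRightMovesAdd (Sum.inl j), by rw [add_moveRight_inl]; exact ihzr j h⟩
    · rw [add_moveRight_inr]; exact ihy j ((pg_le_def.1 h).2 j)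

theorem pg_add_lf_aux' {x y z : PGame.{u}}
    (ihy : ∀ i, x ≤ y.moveLeft i → z + x ≤ z + y.moveLeft i)
    (ihx : ∀ j, x.moveRight j ≤ y → z + x.moveRight j ≤ z + y) (h : x ⧏ y) :
    z + x ⧏ z + y := by
  rw [pg_lf_def]
  rcases pg_lf_def.1 h with ⟨i, hi⟩ | ⟨j, hj⟩
  · exact Or.inl ⟨toLeftMovesAdd (Sum.inr i), by rw [add_moveLeft_inr]; exact ihy i hi⟩
  · exact Or.inr ⟨toRightMovesAdd (Sum.inr j), by rw [add_moveRight_inr]; exact ihx j hj⟩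

theorem pg_add_mono_left (z x y : PGame.{u}) :
    (x ≤ y → z + x ≤ z + y) ∧ (x ⧏ y → z + x ⧏ z + y) := by
  induction z generalizing x y with
  | mk zl zr zL zR IHzl IHzr =>
  induction x generalizing y with
  | mk xl xr xL xR IHxl IHxr =>
  induction y with
  | mk yl yr yL yR IHyl IHyr =>
  exact ⟨pg_add_le_aux' (fun i => (IHxl i _).2) (fun j => (IHyr j).2)
      (fun k => (IHzl k _ _).1) (fun k => (IHzr k _ _).1),
    pg_add_lf_aux' (fun i => (IHyl i).1) (fun j => (IHxr j _).1)⟩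

theorem add_lf_add_right {y z : PGame.{u}} (h : y ⧏ z) (x : PGame.{u}) : y + x ⧏ z + x :=
  (pg_add_mono_right x y z).2 h

theorem add_lf_add_left {y z : PGame.{u}} (h : y ⧏ z) (x : PGame.{u}) : x + y ⧏ x + z :=
  (pg_add_mono_left x y z).2 h

end SetTheory.PGame

/-! ### Auxiliary lemmas -/

theorem spg_eq (Δ : Finset (Finset V)) : SPGame Δ =
    ⟨{v : V // {v} ∈ Δ}, {v : V // {v} ∈ Δ},
    fun v => SPGame (linkC Δ v.1), fun v => SPGame (linkC Δ v.1)⟩ := by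
  rw [SPGame]

theorem mem_joinC {Δ Δ' : Finset (Finset V)} {F : Finset V} :
    F ∈ joinC Δ Δ' ↔ ∃ A ∈ Δ, ∃ B ∈ Δ', A ∪ B = F := by
  simp only [joinC, Finset.mem_image, Finset.mem_product, Prod.exists]
  constructor
  · rintro ⟨A, B, ⟨hA, hB⟩, h⟩; exact ⟨A, hA, B, hB, h⟩
  · rintro ⟨A, hA, B, hB, h⟩; exact ⟨A, B, ⟨hA, hB⟩, h⟩

theorem mem_vertsC {Δ : Finset (Finset V)} {F : Finset V} (hF : F ∈ Δ) {v : V} (hv : v ∈ F) :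
    v ∈ vertsC Δ :=
  Finset.mem_sup.2 ⟨F, hF, hv⟩

theorem joinC_comm (Δ Δ' : Finset (Finset V)) : joinC Δ Δ' = joinC Δ' Δ := by
  ext F
  simp only [mem_joinC]
  constructor
  · rintro ⟨A, hA, B, hB, rfl⟩; exact ⟨B, hB, A, hA, Finset.union_comm B A⟩
  · rintro ⟨A, hA, B, hB, rfl⟩; exact ⟨B, hB, A, hA, Finset.union_comm B A⟩

theorem singleton_mem_joinC_left {Δ Δ' : Finset (Finset V)} {v : V} (hv : {v} ∈ Δ)
    (h0' : ∅ ∈ Δ') : {v} ∈ joinC Δ Δ' :=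
  mem_joinC.2 ⟨{v}, hv, ∅, h0', by simp⟩

theorem singleton_mem_joinC_right {Δ Δ' : Finset (Finset V)} {v : V} (hv : {v} ∈ Δ')
    (h0 : ∅ ∈ Δ) : {v} ∈ joinC Δ Δ' :=
  mem_joinC.2 ⟨∅, h0, {v}, hv, by simp⟩

theorem singleton_mem_joinC {Δ Δ' : Finset (Finset V)} {v : V}
    (h : {v} ∈ joinC Δ Δ') : {v} ∈ Δ ∨ {v} ∈ Δ' := by
  obtain ⟨A, hA, B, hB, hAB⟩ := mem_joinC.1 h
  have hA' : A ⊆ {v} := hAB ▸ Finset.subset_union_left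
  rcases Finset.subset_singleton_iff.1 hA' with rfl | rfl
  · rw [Finset.empty_union] at hAB
    exact Or.inr (hAB ▸ hB)
  · exact Or.inl hA

theorem linkC_isComplex {Δ : Finset (Finset V)} (hΔ : IsComplex Δ) (v : V) :
    IsComplex (linkC Δ v) := by
  intro F hF F' hF'
  simp only [linkC, Finset.mem_filter] at hF ⊢
  exact ⟨hΔ F hF.1 F' hF', fun h => hF.2.1 (hF' h),
    hΔ _ hF.2.2 _ (Finset.insert_subset_insert v hF')⟩

theorem empty_mem_linkC {Δ : Finset (Finset V)} {v : V} (h0 : ∅ ∈ Δ) (hv : {v} ∈ Δ) :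
    ∅ ∈ linkC Δ v := by
  unfold linkC
  rw [Finset.mem_filter]
  exact ⟨h0, Finset.notMem_empty v, by simpa using hv⟩

theorem vertsC_linkC_subset {Δ : Finset (Finset V)} (v : V) :
    vertsC (linkC Δ v) ⊆ vertsC Δ := by
  intro x hx
  simp only [vertsC, Finset.mem_sup, linkC, Finset.mem_filter, id] at hx ⊢
  obtain ⟨F, ⟨hF, -⟩, hx⟩ := hx
  exact ⟨F, hF, hx⟩

theorem linkC_joinC_left {Δ Δ' : Finset (Finset V)} (hΔ : IsComplex Δ) {v : V}
    (hv' : v ∉ vertsC Δ') :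
    linkC (joinC Δ Δ') v = joinC (linkC Δ v) Δ' := by
  ext F
  simp only [linkC, Finset.mem_filter, mem_joinC]
  constructor
  · rintro ⟨-, hvF, A, hA, B, hB, hEq⟩
    have hvB : v ∉ B := fun h => hv' (mem_vertsC hB h)
    have hvA : v ∈ A := by
      have : v ∈ A ∪ B := hEq.symm ▸ Finset.mem_insert_self v F
      rcases Finset.mem_union.1 this with h | h
      · exact h
      · exact absurd h hvB
    refine ⟨A.erase v, ⟨hΔ A hA _ (Finset.erase_subset v A), Finset.notMem_erase v A,
      by rwa [Finset.insert_erase hvA]⟩, B, hB, ?_⟩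
    have hF : F = (insert v F).erase v := (Finset.erase_insert hvF).symm
    rw [hF, ← hEq, Finset.erase_union_distrib, Finset.erase_eq_of_notMem hvB]
  · rintro ⟨A, ⟨hA, hvA, hins⟩, B, hB, rfl⟩
    have hvB : v ∉ B := fun h => hv' (mem_vertsC hB h)
    exact ⟨⟨A, hA, B, hB, rfl⟩, by simp [hvA, hvB],
      insert v A, hins, B, hB, Finset.insert_union v A B⟩

theorem linkC_joinC_right {Δ Δ' : Finset (Finset V)} (hΔ' : IsComplex Δ') {v : V}
    (hv : v ∉ vertsC Δ) :
    linkC (joinC Δ Δ') v = joinC Δ (linkC Δ' v) := by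
  rw [joinC_comm, linkC_joinC_left hΔ' hv, joinC_comm]

theorem spg_moveLeft_lf {Δ : Finset (Finset V)} {v : V} (hv : {v} ∈ Δ) :
    SPGame (linkC Δ v) ⧏ SPGame Δ := by
  rw [spg_eq Δ]
  exact moveLeft_lf (x := PGame.mk {u : V // {u} ∈ Δ} {u : V // {u} ∈ Δ}
    (fun u => SPGame (linkC Δ u.1)) (fun u => SPGame (linkC Δ u.1))) ⟨v, hv⟩

theorem spg_lf_moveRight {Δ : Finset (Finset V)} {v : V} (hv : {v} ∈ Δ) :
    SPGame Δ ⧏ SPGame (linkC Δ v) := by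
  rw [spg_eq Δ]
  exact lf_moveRight (x := PGame.mk {u : V // {u} ∈ Δ} {u : V // {u} ∈ Δ}
    (fun u => SPGame (linkC Δ u.1)) (fun u => SPGame (linkC Δ u.1))) ⟨v, hv⟩

theorem spg_moveLeft_cases {Δ : Finset (Finset V)} {P : PGame → Prop}
    (i : (SPGame Δ).LeftMoves) (h : ∀ w : V, {w} ∈ Δ → P (SPGame (linkC Δ w))) :
    P ((SPGame Δ).moveLeft i) := by
  revert i
  rw [spg_eq Δ]
  rintro ⟨w, hw⟩
  exact h w hw

theorem spg_moveRight_cases {Δ : Finset (Finset V)} {P : PGame → Prop}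
    (i : (SPGame Δ).RightMoves) (h : ∀ w : V, {w} ∈ Δ → P (SPGame (linkC Δ w))) :
    P ((SPGame Δ).moveRight i) := by
  revert i
  rw [spg_eq Δ]
  rintro ⟨w, hw⟩
  exact h w hw

/-- For simplicial complexes on disjoint vertex sets, the impartial strong placement game of
their join is equivalent to the disjunctive sum of their games. -/
theorem spGame_join_equiv_add (Δ Δ' : Finset (Finset V)) (hΔ : IsComplex Δ)
    (hΔ' : IsComplex Δ') (h0 : ∅ ∈ Δ) (h0' : ∅ ∈ Δ')
    (hdisj : Disjoint (vertsC Δ) (vertsC Δ')) :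
    SPGame (joinC Δ Δ') ≈ SPGame Δ + SPGame Δ' := by
  have hnotR : ∀ v : V, {v} ∈ Δ → v ∉ vertsC Δ' := fun v hv h =>
    (Finset.disjoint_left.1 hdisj (mem_vertsC hv (Finset.mem_singleton_self v))) h
  have hnotL : ∀ v : V, {v} ∈ Δ' → v ∉ vertsC Δ := fun v hv h =>
    (Finset.disjoint_right.1 hdisj (mem_vertsC hv (Finset.mem_singleton_self v))) h
  have ihL : ∀ v : V, (hv : {v} ∈ Δ) →
      SPGame (linkC (joinC Δ Δ') v) ≈ SPGame (linkC Δ v) + SPGame Δ' := by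
    intro v hv
    rw [linkC_joinC_left hΔ (hnotR v hv)]
    exact spGame_join_equiv_add (linkC Δ v) Δ' (linkC_isComplex hΔ v) hΔ'
      (empty_mem_linkC h0 hv) h0' (hdisj.mono_left (vertsC_linkC_subset v))
  have ihR : ∀ v : V, (hv : {v} ∈ Δ') →
      SPGame (linkC (joinC Δ Δ') v) ≈ SPGame Δ + SPGame (linkC Δ' v) := by
    intro v hv
    rw [linkC_joinC_right hΔ' (hnotL v hv)]
    exact spGame_join_equiv_add Δ (linkC Δ' v) hΔ (linkC_isComplex hΔ' v)
      h0 (empty_mem_linkC h0' hv) (hdisj.mono_right (vertsC_linkC_subset v))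
  constructor
  · refine le_of_forall_lf (fun i => ?_) (fun j => ?_)
    · refine spg_moveLeft_cases (P := fun g => g ⧏ SPGame Δ + SPGame Δ') i (fun v hv => ?_)
      rcases singleton_mem_joinC hv with h | h
      · exact (lf_congr_left (ihL v h)).2 (add_lf_add_right (spg_moveLeft_lf h) _)
      · exact (lf_congr_left (ihR v h)).2 (add_lf_add_left (spg_moveLeft_lf h) _)
    · refine rightMoves_add_cases (P := fun j => SPGame (joinC Δ Δ') ⧏ (SPGame Δ + SPGame Δ').moveRight j) j (fun i => ?_) (fun i => ?_)
      · beta_reduce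
        rw [add_moveRight_inl]
        refine spg_moveRight_cases (P := fun g => SPGame (joinC Δ Δ') ⧏ g + SPGame Δ') i
          (fun w hw => ?_)
        exact (lf_congr_right (ihL w hw)).1
          (spg_lf_moveRight (singleton_mem_joinC_left hw h0'))
      · beta_reduce
        rw [add_moveRight_inr]
        refine spg_moveRight_cases (P := fun g => SPGame (joinC Δ Δ') ⧏ SPGame Δ + g) i
          (fun w hw => ?_)
        exact (lf_congr_right (ihR w hw)).1
          (spg_lf_moveRight (singleton_mem_joinC_right hw h0))
  · refine le_of_forall_lf (fun i => ?_) (fun j => ?_)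
    · refine leftMoves_add_cases (P := fun i => (SPGame Δ + SPGame Δ').moveLeft i ⧏ SPGame (joinC Δ Δ')) i (fun i => ?_) (fun i => ?_)
      · beta_reduce
        rw [add_moveLeft_inl]
        refine spg_moveLeft_cases (P := fun g => g + SPGame Δ' ⧏ SPGame (joinC Δ Δ')) i
          (fun w hw => ?_)
        exact (lf_congr_left (ihL w hw)).1
          (spg_moveLeft_lf (singleton_mem_joinC_left hw h0'))
      · beta_reduce
        rw [add_moveLeft_inr]
        refine spg_moveLeft_cases (P := fun g => SPGame Δ + g ⧏ SPGame (joinC Δ Δ')) i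
          (fun w hw => ?_)
        exact (lf_congr_left (ihR w hw)).1
          (spg_moveLeft_lf (singleton_mem_joinC_right hw h0))
    · refine spg_moveRight_cases (P := fun g => SPGame Δ + SPGame Δ' ⧏ g) j (fun v hv => ?_)
      rcases singleton_mem_joinC hv with h | h
      · exact (lf_congr_right (ihL v h)).2 (add_lf_add_right (spg_lf_moveRight h) _)
      · exact (lf_congr_right (ihR v h)).2 (add_lf_add_left (spg_lf_moveRight h) _)
termination_by Δ.sup Finset.card + Δ'.sup Finset.card
decreasing_by
  · exact Nat.add_lt_add_right (linkC_sup_lt Δ v hv) _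
  · exact Nat.add_lt_add_left (linkC_sup_lt Δ' v hv) _
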